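/- arXiv:1007.4952 — 3 statements merged into one kernel-verified Lean document; each statement's English description precedes it below -/
import Mathlib

section
/- Let $V_0$ be a $5$-dimensional complex vector space, $U \subset V_0$ a codimension-$1$ subspace, and $\alpha \in \bigwedge^2 V_0$. Then $\alpha \wedge \omega = 0$ for every $\omega \in \bigwedge^3 U$ if and only if the support of $\alpha$ (the smallest subspace $W$ with $\alpha \in \bigwedge^2 W$) is contained in $U$. -/
open ExteriorAlgebra

/-- The image of `⋀^n U` in the exterior algebra of the ambient space, for a subspace `U`. -/
noncomputable def wedgePow {V : Type*} [AddCommGroup V] [Module ℂ V]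
    (U : Submodule ℂ V) (n : ℕ) : Submodule ℂ (ExteriorAlgebra ℂ V) :=
  (U.map (ι ℂ)) ^ n

section Aux

variable {V₀ : Type*} [AddCommGroup V₀] [Module ℂ V₀]

private lemma prod5_eq_ιMulti (v : Fin 5 → V₀) :
    ι ℂ (v 0) * ι ℂ (v 1) * ι ℂ (v 2) * ι ℂ (v 3) * ι ℂ (v 4) = ιMulti ℂ 5 v := by
  simp [ιMulti_apply, List.ofFn_succ, mul_assoc, Matrix.vecTail, Function.comp,
    show (Fin.succ 2 : Fin 5) = 3 from rfl, show ((Fin.succ 2).succ : Fin 5) = 4 from rfl]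

private lemma prod5_eq_ιMulti' (v : Fin 5 → V₀) :
    ι ℂ (v 0) * (ι ℂ (v 1) * (ι ℂ (v 2) * (ι ℂ (v 3) * ι ℂ (v 4)))) = ιMulti ℂ 5 v := by
  rw [← prod5_eq_ιMulti]; simp only [mul_assoc]

private lemma prod5_zero_of_not_inj (b : Fin 5 → V₀) (σ : Fin 5 → Fin 5)
    (h : ¬ Function.Injective σ) :
    ι ℂ (b (σ 0)) * (ι ℂ (b (σ 1)) * (ι ℂ (b (σ 2)) * (ι ℂ (b (σ 3)) * ι ℂ (b (σ 4))))) = 0 := by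
  have h5 := prod5_eq_ιMulti' (b ∘ σ)
  simp only [Function.comp_apply] at h5
  rw [h5]
  obtain ⟨i, j, hij, hne⟩ := Function.not_injective_iff.mp h
  exact (ιMulti ℂ 5).map_eq_zero_of_eq _ (by simp [Function.comp, hij]) hne

private lemma wedgePow_five (U : Submodule ℂ V₀) [FiniteDimensional ℂ U]
    (hU : Module.finrank ℂ U = 4) :
    ((U.map (ι ℂ)) ^ 5 : Submodule ℂ (ExteriorAlgebra ℂ V₀)) = ⊥ := by
  rw [Submodule.pow_eq_span_pow_set, ← le_bot_iff, Submodule.span_le]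
  intro t ht
  obtain ⟨f, hf⟩ := Set.mem_pow.mp ht
  choose u hu he using fun i => (f i).2
  have hdep : ¬ LinearIndependent ℂ u := by
    intro hli
    have h2 : LinearIndependent ℂ (fun i => (⟨u i, hu i⟩ : U)) :=
      LinearIndependent.of_comp U.subtype (by exact hli)
    have := h2.fintype_card_le_finrank
    simp [hU] at this
  have ht0 : t = ιMulti ℂ 5 u := by
    rw [← hf, ← prod5_eq_ιMulti]
    simp only [← he]
    simp [Fin.prod_univ_five, mul_assoc,
      show (Fin.succ 2 : Fin 5) = 3 from rfl, show ((Fin.succ 2).succ : Fin 5) = 4 from rfl]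
  simp [ht0, (ιMulti ℂ 5).map_linearDependent u hdep]

/-- the functional used to detect top-degree components -/
private noncomputable def detF (b : Module.Basis (Fin 5) ℂ V₀) : ∀ n, V₀ [⋀^Fin n]→ₗ[ℂ] ℂ
  | 5 => b.det
  | _ => 0

private lemma phi_ιMulti (b : Module.Basis (Fin 5) ℂ V₀) (v : Fin 5 → V₀) :
    liftAlternating (detF b) (ιMulti ℂ 5 v) = b.det v := by
  rw [liftAlternating_apply_ιMulti]; rfl

private lemma det_perm_ne_zero (b : Module.Basis (Fin 5) ℂ V₀) (σ : Fin 5 → Fin 5)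
    (hσ : Function.Bijective σ) : b.det (b ∘ σ) ≠ 0 := by
  have h1 : b ∘ σ = ⇑b ∘ ⇑(Equiv.ofBijective σ hσ) := rfl
  rw [h1, b.det.map_perm b (Equiv.ofBijective σ hσ), b.det_self]
  rcases Int.units_eq_one_or (Equiv.Perm.sign (Equiv.ofBijective σ hσ)) with h | h <;>
    simp [h]

/-- index data: `sig k = ![k, 4, rest]` where `rest` enumerates `{0,1,2,3} \ {k}`. -/
private def sig : Fin 4 → Fin 5 → Fin 5 :=
  ![![0,4,1,2,3], ![1,4,0,2,3], ![2,4,0,1,3], ![3,4,0,1,2]]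

private lemma sig_bij : ∀ k, Function.Bijective (sig k) := by decide

private lemma sig_zero : ∀ k, sig k 0 = Fin.castSucc k := by decide

private lemma sig_ne_four : ∀ k, ∀ j : Fin 5, 2 ≤ j → sig k j ≠ 4 := by decide

private lemma sig_not_inj : ∀ k i : Fin 4, i ≠ k →
    ¬ Function.Injective ![Fin.castSucc i, 4, sig k 2, sig k 3, sig k 4] := by decide

private lemma phi_prod5 (bb : Module.Basis (Fin 5) ℂ V₀) (v : Fin 5 → V₀) :
    liftAlternating (detF bb) (ι ℂ (v 0) * (ι ℂ (v 1) * (ι ℂ (v 2) * (ι ℂ (v 3) * ι ℂ (v 4)))))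
      = bb.det v := by
  rw [prod5_eq_ιMulti', phi_ιMulti]

private lemma phi_prod5_vec (bb : Module.Basis (Fin 5) ℂ V₀) (i j p q r : Fin 5) :
    liftAlternating (detF bb)
      (ι ℂ (bb i) * (ι ℂ (bb j) * (ι ℂ (bb p) * (ι ℂ (bb q) * ι ℂ (bb r)))))
      = bb.det (⇑bb ∘ ![i,j,p,q,r]) := by
  have := phi_prod5 bb (⇑bb ∘ ![i,j,p,q,r])
  simpa using this

private lemma det_zero_of_not_inj (bb : Module.Basis (Fin 5) ℂ V₀) (σ : Fin 5 → Fin 5)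
    (h : ¬ Function.Injective σ) : bb.det (⇑bb ∘ σ) = 0 := by
  obtain ⟨i, j, hij, hne⟩ := Function.not_injective_iff.mp h
  exact bb.det.map_eq_zero_of_eq _ (by simp [Function.comp, hij]) hne

private lemma sig_one : ∀ k, sig k 1 = 4 := by decide

private lemma sig_eta : ∀ k : Fin 4,
    ![Fin.castSucc k, 4, sig k 2, sig k 3, sig k 4] = sig k := by decide

end Aux

/-- for a hyperplane `U` in a `5`-dimensional space `V₀` and `α ∈ ⋀²V₀`,
`α ∧ ω = 0` for all `ω ∈ ⋀³U` iff the support of `α` is contained in `U`, i.e. iff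
`α` lies in the image of `⋀²U`. -/
theorem wedge_vanish_iff_support_le {V₀ : Type*} [AddCommGroup V₀] [Module ℂ V₀]
    [FiniteDimensional ℂ V₀] (h5 : Module.finrank ℂ V₀ = 5)
    (U : Submodule ℂ V₀) (hU : Module.finrank ℂ U = 4)
    (α : ExteriorAlgebra ℂ V₀) (hα : α ∈ ⋀[ℂ]^2 V₀) :
    (∀ ω ∈ wedgePow U 3, α * ω = 0) ↔ α ∈ wedgePow U 2 := by
  set A : Submodule ℂ (ExteriorAlgebra ℂ V₀) := U.map (ι ℂ) with hA
  have hA5 : A ^ 5 = ⊥ := wedgePow_five U hU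
  constructor
  · intro h
    -- set up an adapted basis
    obtain ⟨L, hL⟩ := Submodule.exists_isCompl U
    have hL1 : Module.finrank ℂ L = 1 := by
      have := Submodule.finrank_add_eq_of_isCompl hL
      omega
    let bU : Module.Basis (Fin 4) ℂ U := Module.finBasisOfFinrankEq ℂ U hU
    let bL : Module.Basis (Fin 1) ℂ L := Module.finBasisOfFinrankEq ℂ L hL1
    let b : Module.Basis (Fin 5) ℂ V₀ :=
      ((bU.prod bL).map (Submodule.prodEquivOfIsCompl U L hL)).reindex finSumFinEquiv
    have hsl : ∀ i : Fin 4, finSumFinEquiv.symm (Fin.castSucc i) = Sum.inl i := fun i =>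
      finSumFinEquiv_symm_apply_castAdd i
    have hsr : finSumFinEquiv.symm (4 : Fin 5) = Sum.inr (0 : Fin 1) :=
      finSumFinEquiv_symm_apply_natAdd 0
    have hb : ∀ i : Fin 4, b (Fin.castSucc i) = (bU i : V₀) := by
      intro i
      simp [b, Module.Basis.reindex_apply, Module.Basis.prod_apply, hsl, Submodule.coe_prodEquivOfIsCompl']
    have hb4 : b 4 = (bL 0 : V₀) := by
      simp [b, Module.Basis.reindex_apply, Module.Basis.prod_apply, hsr, Submodule.coe_prodEquivOfIsCompl']
    have hUspan : U = Submodule.span ℂ (Set.range fun i : Fin 4 => b (Fin.castSucc i)) := by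
      conv_lhs => rw [← Submodule.map_subtype_top U, ← bU.span_eq, Submodule.map_span]
      exact congrArg _ (by rw [← Set.range_comp]; exact congrArg _ (funext fun i => (hb i).symm))
    have hLspan : L = Submodule.span ℂ {b 4} := by
      conv_lhs => rw [← Submodule.map_subtype_top L, ← bL.span_eq, Submodule.map_span]
      rw [← Set.range_comp, hb4, Set.range_unique]
      rfl
    -- abbreviations
    set e : Fin 5 → ExteriorAlgebra ℂ V₀ := fun i => ι ℂ (b i) with he
    set B : Submodule ℂ (ExteriorAlgebra ℂ V₀) := L.map (ι ℂ) with hB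
    have hAspan : A = Submodule.span ℂ (Set.range fun i : Fin 4 => e (Fin.castSucc i)) := by
      rw [hA, hUspan, Submodule.map_span, ← Set.range_comp]
      rfl
    have hBspan : B = Submodule.span ℂ {e 4} := by
      rw [hB, hLspan, Submodule.map_span, Set.image_singleton]
    -- decompose α
    have hrange : LinearMap.range (ι ℂ (M := V₀)) ≤ A ⊔ B := by
      rintro x ⟨v, rfl⟩
      have hv : v ∈ U ⊔ L := by rw [hL.sup_eq_top]; trivial
      obtain ⟨u, hu, l, hl, rfl⟩ := Submodule.mem_sup.mp hv
      rw [map_add]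
      exact Submodule.add_mem_sup (Submodule.mem_map_of_mem hu) (Submodule.mem_map_of_mem hl)
    have hBB : B * B = ⊥ := by
      rw [hBspan, Submodule.span_mul_span, Set.singleton_mul_singleton, ι_sq_zero,
        Submodule.span_zero_singleton]
    have hsplit : α ∈ A * A ⊔ A * B ⊔ B * A := by
      have h1 : (⋀[ℂ]^2 V₀ : Submodule ℂ (ExteriorAlgebra ℂ V₀)) ≤ (A ⊔ B) * (A ⊔ B) := by
        rw [show (⋀[ℂ]^2 V₀ : Submodule ℂ (ExteriorAlgebra ℂ V₀))
            = LinearMap.range (ι ℂ (M := V₀)) * LinearMap.range (ι ℂ (M := V₀)) from sq _]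
        exact mul_le_mul' hrange hrange
      have h2 := h1 hα
      rw [Submodule.sup_mul, Submodule.mul_sup, Submodule.mul_sup, hBB, sup_bot_eq] at h2
      exact h2
    -- explicit decomposition α = a + m
    obtain ⟨x1, hx1, m2, hm2, hα2⟩ := Submodule.mem_sup.mp hsplit
    obtain ⟨a, ha, m1, hm1, hx1e⟩ := Submodule.mem_sup.mp hx1
    set g1 : Fin 4 → ExteriorAlgebra ℂ V₀ := fun i => e (Fin.castSucc i) * e 4 with hg1
    set g2 : Fin 4 → ExteriorAlgebra ℂ V₀ := fun i => e 4 * e (Fin.castSucc i) with hg2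
    have hAB : A * B = Submodule.span ℂ (Set.range g1) := by
      rw [hAspan, hBspan, Submodule.span_mul_span, Set.mul_singleton, ← Set.range_comp]
      rfl
    have hBA : B * A = Submodule.span ℂ (Set.range g2) := by
      rw [hAspan, hBspan, Submodule.span_mul_span, Set.singleton_mul, ← Set.range_comp]
      rfl
    have hm12 : m1 + m2 ∈ Submodule.span ℂ (Set.range (Sum.elim g1 g2)) := by
      rw [Set.Sum.elim_range, Submodule.span_union]
      exact Submodule.add_mem_sup (hAB ▸ hm1) (hBA ▸ hm2)
    obtain ⟨c, hc⟩ := (Submodule.mem_span_range_iff_exists_fun ℂ).mp hm12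
    have hαm : α = a + (m1 + m2) := by rw [← add_assoc, hx1e, hα2]
    -- the detecting functional
    set φ : ExteriorAlgebra ℂ V₀ →ₗ[ℂ] ℂ := liftAlternating (detF b) with hφdef
    have hval : ∀ i j p q r : Fin 5,
        φ (e i * (e j * (e p * (e q * e r)))) = b.det (⇑b ∘ ![i,j,p,q,r]) :=
      fun i j p q r => phi_prod5_vec b i j p q r
    have hswap : ∀ i : Fin 4, e 4 * e (Fin.castSucc i) = -(e (Fin.castSucc i) * e 4) :=
      fun i => eq_neg_of_add_eq_zero_left (ι_add_mul_swap (b 4) (b (Fin.castSucc i)))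
    have hbU : ∀ j : Fin 5, j ≠ 4 → b j ∈ U := by
      intro j hj
      obtain ⟨i, rfl⟩ := Fin.exists_castSucc_eq.mpr
        (show j ≠ Fin.last 4 from fun hlast => hj (by rw [hlast]; rfl))
      rw [hb i]; exact SetLike.coe_mem _
    have heA : ∀ j : Fin 5, j ≠ 4 → e j ∈ A := fun j hj => Submodule.mem_map_of_mem (hbU j hj)
    -- the key coefficient identities
    have hk : ∀ k : Fin 4, c (Sum.inl k) = c (Sum.inr k) := by
      intro k
      have hω3 : e (sig k 2) * e (sig k 3) * e (sig k 4) ∈ A ^ 3 := by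
        have h3 : A ^ 3 = A * A * A := by rw [pow_succ, pow_two]
        rw [h3]
        exact Submodule.mul_mem_mul
          (Submodule.mul_mem_mul (heA _ (sig_ne_four k 2 (by decide)))
            (heA _ (sig_ne_four k 3 (by decide)))) (heA _ (sig_ne_four k 4 (by decide)))
      have hαω : α * (e (sig k 2) * e (sig k 3) * e (sig k 4)) = 0 := h _ hω3
      have ha0 : a * (e (sig k 2) * e (sig k 3) * e (sig k 4)) = 0 := by
        have hmem : a * (e (sig k 2) * e (sig k 3) * e (sig k 4)) ∈ A * A * A ^ 3 :=
          Submodule.mul_mem_mul ha hω3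
        rw [← pow_two, ← pow_add] at hmem
        rw [hA5] at hmem
        simpa using hmem
      have hmω : (m1 + m2) * (e (sig k 2) * e (sig k 3) * e (sig k 4)) = 0 := by
        have := hαm ▸ hαω
        rw [add_mul, ha0, zero_add] at this
        exact this
      have hφ0 : φ ((∑ j, c j • Sum.elim g1 g2 j) *
          (e (sig k 2) * e (sig k 3) * e (sig k 4))) = 0 := by
        rw [hc, hmω, map_zero]
      rw [Finset.sum_mul] at hφ0
      simp only [smul_mul_assoc, map_sum, map_smul, Fintype.sum_sum_type,
        Sum.elim_inl, Sum.elim_inr, hg1, hg2, hswap, neg_mul, smul_neg, map_neg,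
        mul_assoc, map_add, map_sum, map_smul] at hφ0
      simp only [hval] at hφ0
      have hsum1 : ∑ i : Fin 4, c (Sum.inl i) •
          b.det (⇑b ∘ ![Fin.castSucc i, 4, sig k 2, sig k 3, sig k 4])
          = c (Sum.inl k) • b.det (⇑b ∘ sig k) := by
        rw [Finset.sum_eq_single k]
        · rw [sig_eta k]
        · intro i _ hik
          rw [det_zero_of_not_inj b _ (sig_not_inj k i hik), smul_zero]
        · intro hk'; exact absurd (Finset.mem_univ k) hk'
      have hsum2 : ∑ i : Fin 4, c (Sum.inr i) •
          b.det (⇑b ∘ ![Fin.castSucc i, 4, sig k 2, sig k 3, sig k 4])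
          = c (Sum.inr k) • b.det (⇑b ∘ sig k) := by
        rw [Finset.sum_eq_single k]
        · rw [sig_eta k]
        · intro i _ hik
          rw [det_zero_of_not_inj b _ (sig_not_inj k i hik), smul_zero]
        · intro hk'; exact absurd (Finset.mem_univ k) hk'
      rw [Finset.sum_neg_distrib] at hφ0
      rw [hsum1, hsum2] at hφ0
      have hD : b.det (⇑b ∘ sig k) ≠ 0 := det_perm_ne_zero b (sig k) (sig_bij k)
      have h2 : (c (Sum.inl k) - c (Sum.inr k)) * b.det (⇑b ∘ sig k) = 0 := by
        rw [smul_eq_mul, smul_eq_mul] at hφ0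
        linear_combination hφ0
      rcases mul_eq_zero.mp h2 with h3 | h3
      · exact sub_eq_zero.mp h3
      · exact absurd h3 hD
    have hm0 : m1 + m2 = 0 := by
      rw [← hc, Fintype.sum_sum_type, ← Finset.sum_add_distrib]
      apply Finset.sum_eq_zero
      intro i _
      simp only [Sum.elim_inl, Sum.elim_inr, hg1, hg2, hswap, smul_neg, ← hk]
      exact add_neg_cancel _
    rw [hαm, hm0, add_zero]
    show a ∈ (U.map (ι ℂ)) ^ 2
    rw [← hA, pow_two]
    exact ha
  · intro hmem ω hω
    have h1 : α * ω ∈ A ^ 2 * A ^ 3 := Submodule.mul_mem_mul hmem hω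
    rw [← pow_add] at h1
    rw [hA5] at h1
    simpa using h1
end

section
/- Let $V_0$ be a $5$-dimensional complex vector space. If $\omega \in \bigwedge^3 V_0$ is not decomposable, then there exists a unique line $[v] \in \mathbb{P}(V_0)$ such that $v \wedge \omega = 0$. -/
open ExteriorAlgebra

namespace ULA

variable {V : Type*} [AddCommGroup V] [Module ℂ V]

/-- Compatibility: the old (subtype-indexed) family of basis wedges. -/
noncomputable def ιMulti_family (R : Type*) [CommRing R] {M : Type*} [AddCommGroup M] [Module R M]
    (n : ℕ) {I : Type*} [LinearOrder I] (v : I → M)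
    (s : {s : Finset I // Finset.card s = n}) : ExteriorAlgebra R M :=
  ιMulti R n fun i => v (Finset.orderIsoOfFin s.1 s.2 i)


/-- The alternating coordinate functional attached to a finset `s` of basis indices. -/
noncomputable def coordAlt (b : Module.Basis (Fin 5) ℂ V) (n : ℕ) (s : Finset (Fin 5))
    (hs : s.card = n) : V [⋀^Fin n]→ₗ[ℂ] ℂ :=
  (Matrix.detRowAlternating : (Fin n → ℂ) [⋀^Fin n]→ₗ[ℂ] ℂ).compLinearMap
    (LinearMap.pi fun i => b.coord (s.orderIsoOfFin hs i))

lemma coordAlt_apply (b : Module.Basis (Fin 5) ℂ V) (n : ℕ) (s : Finset (Fin 5)) (hs : s.card = n)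
    (v : Fin n → V) :
    coordAlt b n s hs v = Matrix.det (fun i j => b.coord (s.orderIsoOfFin hs j) (v i)) := rfl

lemma coordAlt_self (b : Module.Basis (Fin 5) ℂ V) (n : ℕ) (s : Finset (Fin 5)) (hs : s.card = n) :
    coordAlt b n s hs (fun i => b (s.orderIsoOfFin hs i)) = 1 := by
  rw [coordAlt_apply]
  have : (fun i j => b.coord (s.orderIsoOfFin hs j) (b (s.orderIsoOfFin hs i)))
      = (1 : Matrix (Fin n) (Fin n) ℂ) := by
    ext i j
    simp only [Module.Basis.coord_apply, Module.Basis.repr_self, Matrix.one_apply]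
    rw [Finsupp.single_apply]
    by_cases h : i = j
    · simp [h]
    · have : (s.orderIsoOfFin hs i : Fin 5) ≠ (s.orderIsoOfFin hs j : Fin 5) := by
        intro hc
        exact h (by simpa using (s.orderIsoOfFin hs).injective (Subtype.ext hc))
      simp [this, h]
  rw [this, Matrix.det_one]

lemma coordAlt_ne (b : Module.Basis (Fin 5) ℂ V) (n : ℕ) (s t : Finset (Fin 5)) (hs : s.card = n)
    (ht : t.card = n) (hst : s ≠ t) :
    coordAlt b n s hs (fun i => b (t.orderIsoOfFin ht i)) = 0 := by
  rw [coordAlt_apply]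
  -- find an element of t not in s
  have hex : ∃ x ∈ t, x ∉ s := by
    by_contra hc
    push_neg at hc
    exact hst (Finset.eq_of_subset_of_card_le hc (by omega)).symm
  obtain ⟨x, hxt, hxs⟩ := hex
  obtain ⟨i, hi⟩ := (t.orderIsoOfFin ht).surjective ⟨x, hxt⟩
  apply Matrix.det_eq_zero_of_row_eq_zero i
  intro j
  have : (s.orderIsoOfFin hs j : Fin 5) ≠ (t.orderIsoOfFin ht i : Fin 5) := by
    rw [hi]
    intro hc
    have : ((s.orderIsoOfFin hs) j : Fin 5) ∈ s := (s.orderIsoOfFin hs j).2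
    rw [hc] at this
    exact hxs this
  simp only [Module.Basis.coord_apply, Module.Basis.repr_self]
  rw [Finsupp.single_apply, if_neg (by exact fun hc => this hc.symm)]

/-- The linear functional on the exterior algebra extracting the `s`-coefficient in degree `n`. -/
noncomputable def phi (b : Module.Basis (Fin 5) ℂ V) (n : ℕ) (s : Finset (Fin 5))
    (hs : s.card = n) : ExteriorAlgebra ℂ V →ₗ[ℂ] ℂ :=
  liftAlternating (Pi.single n (coordAlt b n s hs))

lemma phi_ιMulti (b : Module.Basis (Fin 5) ℂ V) (n : ℕ) (s : Finset (Fin 5)) (hs : s.card = n)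
    (v : Fin n → V) : phi b n s hs (ιMulti ℂ n v) = coordAlt b n s hs v := by
  rw [phi, liftAlternating_apply_ιMulti, Pi.single_eq_same]

lemma phi_wedge_self (b : Module.Basis (Fin 5) ℂ V) (n : ℕ) (s : Finset (Fin 5)) (hs : s.card = n) :
    phi b n s hs (ιMulti_family ℂ n b ⟨s, hs⟩) = 1 := by
  rw [ιMulti_family, phi_ιMulti]
  exact coordAlt_self b n s hs

lemma phi_wedge_ne (b : Module.Basis (Fin 5) ℂ V) (n : ℕ) (s : Finset (Fin 5)) (hs : s.card = n)
    (t : {s : Finset (Fin 5) // s.card = n}) (hst : s ≠ t.1) :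
    phi b n s hs (ιMulti_family ℂ n b t) = 0 := by
  rw [ιMulti_family, phi_ιMulti]
  exact coordAlt_ne b n s t.1 hs t.2 hst




lemma image_orderIsoOfFin (s : Finset (Fin 5)) {n : ℕ} (hs : s.card = n) :
    Finset.image (fun i => (s.orderIsoOfFin hs i : Fin 5)) Finset.univ = s := by
  apply Finset.eq_of_subset_of_card_le
  · intro x hx
    simp only [Finset.mem_image] at hx
    obtain ⟨i, _, rfl⟩ := hx
    exact (s.orderIsoOfFin hs i).2
  · rw [hs, Finset.card_image_of_injective _
      (fun i j h => (s.orderIsoOfFin hs).injective (Subtype.ext h))]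
    simp

/-- key lemma A: an injective wedge of basis vectors is ± the canonical wedge on its image. -/
lemma ιMulti_inj_eq (b : Module.Basis (Fin 5) ℂ V) {n : ℕ} (r : Fin n → Fin 5)
    (hr : Function.Injective r) :
    ∃ ε : ℂ, (ε = 1 ∨ ε = -1) ∧
      ιMulti ℂ n (b ∘ r) =
        ε • ιMulti_family ℂ n b ⟨Finset.image r Finset.univ,
          by rw [Finset.card_image_of_injective _ hr]; simp⟩ := by
  set s : Finset (Fin 5) := Finset.image r Finset.univ with hsdef
  have hs : s.card = n := by rw [hsdef, Finset.card_image_of_injective _ hr]; simp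
  have hmem : ∀ i, r i ∈ s := fun i => Finset.mem_image_of_mem r (Finset.mem_univ i)
  let f : Fin n → Fin n := fun i => (s.orderIsoOfFin hs).symm ⟨r i, hmem i⟩
  have hfinj : Function.Injective f := by
    intro i j h
    have := (s.orderIsoOfFin hs).symm.injective h
    exact hr (by simpa [Subtype.ext_iff] using this)
  let σ : Equiv.Perm (Fin n) := Equiv.ofBijective f (Finite.injective_iff_bijective.1 hfinj)
  have hcomp : (b ∘ r) = (fun i => b (s.orderIsoOfFin hs i)) ∘ σ := by
    funext i
    simp only [Function.comp_apply]
    congr 1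
    show r i = ((s.orderIsoOfFin hs) (f i) : Fin 5)
    simp [f]
  refine ⟨((Equiv.Perm.sign σ : ℤ) : ℂ), ?_, ?_⟩
  · rcases Int.units_eq_one_or (Equiv.Perm.sign σ) with h | h <;> rw [h] <;> simp
  · rw [hcomp, AlternatingMap.map_perm]
    rw [ιMulti_family]
    simp only [Units.smul_def]
    rw [Int.cast_smul_eq_zsmul]

/-- Every element of the `n`-th exterior power is a linear combination of basis wedges. -/
lemma exists_expansion (b : Module.Basis (Fin 5) ℂ V) (n : ℕ) (x : ExteriorAlgebra ℂ V)
    (hx : x ∈ ⋀[ℂ]^n V) :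
    ∃ c : {s : Finset (Fin 5) // s.card = n} → ℂ,
      x = ∑ s, c s • ιMulti_family ℂ n b s := by
  have hspan : x ∈ Submodule.span ℂ (Set.range (ιMulti_family ℂ n b)) := by
    have hle : (⋀[ℂ]^n V : Submodule ℂ (ExteriorAlgebra ℂ V)) ≤
        Submodule.span ℂ (Set.range (ιMulti_family ℂ n b)) := by
      rw [← ιMulti_span_fixedDegree]
      rw [Submodule.span_le]
      rintro _ ⟨v, rfl⟩
      -- expand each v i in the basis
      have hv : ιMulti ℂ n v
          = (ιMulti ℂ n).toMultilinearMap (fun i => ∑ j, b.repr (v i) j • b j) := by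
        have hvv : v = fun i => ∑ j, b.repr (v i) j • b j :=
          funext fun i => (Module.Basis.sum_repr b (v i)).symm
        conv_lhs => rw [hvv]
        rfl
      rw [hv, MultilinearMap.map_sum]
      apply Submodule.sum_mem
      intro r _
      have : ((ιMulti ℂ n).toMultilinearMap fun i => b.repr (v i) (r i) • b (r i))
          = (∏ i, b.repr (v i) (r i)) • (ιMulti ℂ n).toMultilinearMap (fun i => b (r i)) := by
        rw [MultilinearMap.map_smul_univ]
      rw [this]
      apply Submodule.smul_mem
      have hgoal : (ιMulti ℂ n).toMultilinearMap (fun i => b (r i)) = ιMulti ℂ n (⇑b ∘ r) := rfl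
      rw [hgoal]
      by_cases hrinj : Function.Injective r
      · obtain ⟨ε, _, hε⟩ := ιMulti_inj_eq b r hrinj
        rw [hε]
        exact Submodule.smul_mem _ _ (Submodule.subset_span ⟨_, rfl⟩)
      · have h0 : ιMulti ℂ n (⇑b ∘ r) = 0 :=
          AlternatingMap.map_eq_zero_of_not_injective _ _
            (fun hc => hrinj (fun i j h => hc (congrArg b h)))
        rw [h0]
        exact Submodule.zero_mem _
    exact hle hx
  obtain ⟨c, hc⟩ := (Submodule.mem_span_range_iff_exists_fun ℂ).1 hspan
  exact ⟨c, hc.symm⟩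



/-- anticommutation of `ι w` with an `n`-fold wedge. -/
lemma ι_mul_ιMulti (w : V) : ∀ (n : ℕ) (v : Fin n → V),
    ι ℂ w * ιMulti ℂ n v = ((-1 : ℂ)^n) • (ιMulti ℂ n v * ι ℂ w) := by
  intro n
  induction n with
  | zero => intro v; simp
  | succ n ih =>
    intro v
    rw [ιMulti_succ_apply]
    have hswap : ι ℂ w * ι ℂ (v 0) = -(ι ℂ (v 0) * ι ℂ w) :=
      eq_neg_of_add_eq_zero_left (ι_add_mul_swap _ _)
    calc ι ℂ w * (ι ℂ (v 0) * ιMulti ℂ n (Matrix.vecTail v))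
        = (ι ℂ w * ι ℂ (v 0)) * ιMulti ℂ n (Matrix.vecTail v) := by rw [mul_assoc]
      _ = -(ι ℂ (v 0) * (ι ℂ w * ιMulti ℂ n (Matrix.vecTail v))) := by
          rw [hswap, neg_mul, mul_assoc]
      _ = -(ι ℂ (v 0) * (((-1 : ℂ)^n) • (ιMulti ℂ n (Matrix.vecTail v) * ι ℂ w))) := by
          rw [ih]
      _ = ((-1 : ℂ)^(n+1)) • (ι ℂ (v 0) * ιMulti ℂ n (Matrix.vecTail v) * ι ℂ w) := by
          rw [mul_smul_comm, pow_succ]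
          rw [mul_assoc]
          simp [smul_smul]
  
lemma ι_mul_mem (w : V) {n : ℕ} {x : ExteriorAlgebra ℂ V} (hx : x ∈ ⋀[ℂ]^n V) :
    ι ℂ w * x = ((-1 : ℂ)^n) • (x * ι ℂ w) := by
  rw [← ιMulti_span_fixedDegree] at hx
  induction hx using Submodule.span_induction with
  | mem x hxm =>
    obtain ⟨v, rfl⟩ := hxm
    exact ι_mul_ιMulti w n v
  | zero => simp
  | add x y _ _ hx hy => rw [mul_add, add_mul, hx, hy, smul_add]
  | smul c x _ hx => rw [mul_smul_comm, hx, smul_mul_assoc, smul_comm]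

lemma mem_exterior_mul {n : ℕ} (w : V) {x : ExteriorAlgebra ℂ V} (hx : x ∈ ⋀[ℂ]^n V) :
    ι ℂ w * x ∈ ⋀[ℂ]^(n+1) V := by
  have : (⋀[ℂ]^(n+1) V : Submodule ℂ (ExteriorAlgebra ℂ V))
      = (LinearMap.range (ι ℂ : V →ₗ[ℂ] ExteriorAlgebra ℂ V)) * ⋀[ℂ]^n V := by
    rw [exteriorPower, pow_succ']
  rw [this]
  exact Submodule.mul_mem_mul (LinearMap.mem_range_self _ _) hx

lemma ι_mul_ιMulti_cons {n : ℕ} (u : V) (v : Fin n → V) :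
    ι ℂ u * ιMulti ℂ n v = ιMulti ℂ (n+1) (Fin.cons u v) := by
  rw [ιMulti_succ_apply, Fin.cons_zero]
  congr 1

lemma wedge_congr (b : Module.Basis (Fin 5) ℂ V) {n : ℕ} (s t : {s : Finset (Fin 5) // s.card = n})
    (h : s.1 = t.1) : ιMulti_family ℂ n b s = ιMulti_family ℂ n b t := by
  cases s; cases t
  cases Subtype.ext h
  rfl

lemma cons_comp (b : Module.Basis (Fin 5) ℂ V) {n : ℕ} (j : Fin 5) (t : Fin n → Fin 5) :
    Fin.cons (b j) (fun i => b (t i)) = ⇑b ∘ (Fin.cons j t) := by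
  funext i
  induction i using Fin.cases <;> simp

/-- injectivity of `Fin.cons j t` for the enumeration `t` of `s` when `j ∉ s`. -/
lemma cons_enum_injective {n : ℕ} (j : Fin 5) (s : Finset (Fin 5)) (hs : s.card = n)
    (hj : j ∉ s) :
    Function.Injective (Fin.cons j (fun i => (s.orderIsoOfFin hs i : Fin 5)) : Fin (n+1) → Fin 5) := by
  rw [Fin.cons_injective_iff]
  constructor
  · rintro ⟨i, hi⟩
    exact hj (hi ▸ (s.orderIsoOfFin hs i).2)
  · intro a a' h
    exact (s.orderIsoOfFin hs).injective (Subtype.ext h)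

/-- multiplication of a basis vector with a basis wedge, case `j ∈ s`: zero. -/
lemma ι_mul_wedge_mem (b : Module.Basis (Fin 5) ℂ V) {n : ℕ} (j : Fin 5)
    (s : {s : Finset (Fin 5) // s.card = n}) (hj : j ∈ s.1) :
    ι ℂ (b j) * ιMulti_family ℂ n b s = 0 := by
  rw [ιMulti_family, ι_mul_ιMulti_cons, cons_comp]
  apply AlternatingMap.map_eq_zero_of_not_injective
  intro hc
  have hinj : Function.Injective (Fin.cons j (fun i => (s.1.orderIsoOfFin s.2 i : Fin 5)) : Fin (n+1) → Fin 5) :=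
    fun a a' h => hc (congrArg b h)
  rw [Fin.cons_injective_iff] at hinj
  obtain ⟨i, hi⟩ := (s.1.orderIsoOfFin s.2).surjective ⟨j, hj⟩
  exact hinj.1 ⟨i, by simp [hi]⟩

/-- multiplication of a basis vector with a basis wedge, case `j ∉ s`: `± wedge (insert j s)`. -/
lemma ι_mul_wedge_not_mem (b : Module.Basis (Fin 5) ℂ V) {n : ℕ} (j : Fin 5)
    (s : {s : Finset (Fin 5) // s.card = n}) (hj : j ∉ s.1) :
    ∃ ε : ℂ, (ε = 1 ∨ ε = -1) ∧
      ι ℂ (b j) * ιMulti_family ℂ n b s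
        = ε • ιMulti_family ℂ (n+1) b
            ⟨insert j s.1, by rw [Finset.card_insert_of_notMem hj, s.2]⟩ := by
  rw [ιMulti_family, ι_mul_ιMulti_cons, cons_comp]
  have hrinj := cons_enum_injective j s.1 s.2 hj
  obtain ⟨ε, hε1, hε2⟩ := ιMulti_inj_eq b _ hrinj
  refine ⟨ε, hε1, ?_⟩
  rw [hε2]
  congr 1
  apply wedge_congr
  show Finset.image _ Finset.univ = insert j s.1
  ext x
  simp only [Finset.mem_image, Finset.mem_insert, Finset.mem_univ, true_and]
  constructor
  · rintro ⟨a, ha⟩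
    induction a using Fin.cases with
    | zero => left; rw [← ha]; rfl
    | succ i =>
      right
      rw [← ha, Fin.cons_succ]
      exact (s.1.orderIsoOfFin s.2 i).2
  · rintro (rfl | hx)
    · exact ⟨0, rfl⟩
    · obtain ⟨i, hi⟩ := (s.1.orderIsoOfFin s.2).surjective ⟨x, hx⟩
      exact ⟨i.succ, by rw [Fin.cons_succ, hi]⟩

lemma card_univ5 : (Finset.univ : Finset (Fin 5)).card = 5 := by simp

/-- nondegeneracy: an element of `⋀⁴V` annihilated (in top degree) by all `ι w` is zero. -/
lemma top_pairing_nondeg (b : Module.Basis (Fin 5) ℂ V) {x : ExteriorAlgebra ℂ V}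
    (hx : x ∈ ⋀[ℂ]^4 V)
    (hz : ∀ w : V, phi b 5 Finset.univ card_univ5 (x * ι ℂ w) = 0) : x = 0 := by
  obtain ⟨d, hd⟩ := exists_expansion b 4 x hx
  suffices hall : ∀ t : {s : Finset (Fin 5) // s.card = 4}, d t = 0 by
    rw [hd]
    simp [hall]
  intro t
  -- pick the missing index
  have hex : ∃ j, j ∉ t.1 := by
    by_contra hcon
    push_neg at hcon
    have : Finset.univ ⊆ t.1 := fun x _ => hcon x
    have := Finset.card_le_card this
    rw [t.2, card_univ5] at this
    omega
  obtain ⟨j, hj⟩ := hex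
  have huniq : ∀ t' : {s : Finset (Fin 5) // s.card = 4}, j ∉ t'.1 → t' = t := by
    have herase : (Finset.univ.erase j).card = 4 := by
      rw [Finset.card_erase_of_mem (Finset.mem_univ j), card_univ5]
    have key : ∀ t' : {s : Finset (Fin 5) // s.card = 4}, j ∉ t'.1 →
        t'.1 = Finset.univ.erase j := by
      intro t' hj'
      apply Finset.eq_of_subset_of_card_le
      · intro x hx
        exact Finset.mem_erase.2 ⟨fun hc => hj' (hc ▸ hx), Finset.mem_univ x⟩
      · rw [t'.2, herase]
    intro t' hj'
    exact Subtype.ext ((key t' hj').trans (key t hj).symm)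
  -- evaluate the hypothesis at `b j`
  have key : phi b 5 Finset.univ card_univ5 (ι ℂ (b j) * x) = 0 := by
    rw [ι_mul_mem (b j) hx]
    simpa using hz (b j)
  rw [hd, Finset.mul_sum] at key
  simp only [mul_smul_comm] at key
  rw [map_sum] at key
  rw [Fintype.sum_eq_single t (fun t' ht' => ?_)] at key
  · obtain ⟨ε, hε1, hε2⟩ := ι_mul_wedge_not_mem b j t hj
    rw [map_smul, hε2, map_smul] at key
    have hins : insert j t.1 = Finset.univ := by
      apply Finset.eq_of_subset_of_card_le (Finset.subset_univ _)
      rw [Finset.card_insert_of_notMem hj, t.2, card_univ5]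
    rw [wedge_congr b _ ⟨Finset.univ, card_univ5⟩ hins, phi_wedge_self b 5 Finset.univ card_univ5] at key
    rcases hε1 with rfl | rfl <;> simpa using key
  · have hjm : j ∈ t'.1 := by
      by_contra hcj
      exact ht' (huniq t' hcj)
    rw [map_smul, ι_mul_wedge_mem b j t' hjm]
    simp

set_option maxRecDepth 4000 in
/-- Existence of an annihilating vector. -/
lemma exists_annihilator (b : Module.Basis (Fin 5) ℂ V) (ω : ExteriorAlgebra ℂ V)
    (hω : ω ∈ ⋀[ℂ]^3 V) : ∃ v : V, v ≠ 0 ∧ ι ℂ v * ω = 0 := by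
  classical
  set Φ := phi b 5 Finset.univ card_univ5 with hΦ
  -- the alternating bilinear form
  let Bl : V →ₗ[ℂ] V →ₗ[ℂ] ℂ := LinearMap.mk₂ ℂ (fun v w => Φ (ι ℂ v * ω * ι ℂ w))
    (fun v v' w => by rw [map_add, add_mul, add_mul, map_add])
    (fun c v w => by rw [map_smul, smul_mul_assoc, smul_mul_assoc, map_smul])
    (fun v w w' => by rw [map_add, mul_add, map_add])
    (fun c v w => by rw [map_smul, mul_smul_comm, map_smul])
  have hBl : ∀ v w, Bl v w = Φ (ι ℂ v * ω * ι ℂ w) := fun v w => rfl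
  have hAlt : ∀ v, Bl v v = 0 := by
    intro v
    rw [hBl]
    have h1 : ι ℂ v * ω = ((-1 : ℂ)^3) • (ω * ι ℂ v) := ι_mul_mem v hω
    rw [h1, smul_mul_assoc, mul_assoc, ι_sq_zero, mul_zero, smul_zero, map_zero]
  have hskew : ∀ v w, Bl w v = -Bl v w := by
    intro v w
    have h2 := hAlt (v + w)
    simp only [map_add, LinearMap.add_apply] at h2
    linear_combination h2 - hAlt v - hAlt w
  -- matrix of the form
  set M : Matrix (Fin 5) (Fin 5) ℂ := Matrix.of fun i j => Bl (b i) (b j) with hM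
  have hdet : M.det = 0 := by
    have h2 : M.transpose = -M := by
      ext i j
      show M j i = - M i j
      exact hskew (b i) (b j)
    have h1 : M.det = (-M).det := by rw [← h2, Matrix.det_transpose]
    rw [Matrix.det_neg] at h1
    simp only [Fintype.card_fin] at h1
    have h4 : (2 : ℂ) * M.det = 0 := by linear_combination h1
    rcases mul_eq_zero.1 h4 with h | h
    · norm_num at h
    · exact h
  obtain ⟨g, hg0, hgM⟩ := (Matrix.exists_vecMul_eq_zero_iff).2 hdet
  refine ⟨∑ i, g i • b i, ?_, ?_⟩
  · intro hc
    apply hg0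
    funext i
    exact Fintype.linearIndependent_iff.1 b.linearIndependent g hc i
  · apply top_pairing_nondeg b (mem_exterior_mul _ hω)
    intro w
    -- reduce to basis vectors
    have hbasis : ∀ j, Φ ((ι ℂ (∑ i, g i • b i) * ω) * ι ℂ (b j)) = 0 := by
      intro j
      have hsum : Bl (∑ i, g i • b i) (b j) = 0 := by
        have hexp : Bl (∑ i, g i • b i) (b j) = ∑ i, g i * M i j := by
          rw [map_sum, LinearMap.sum_apply]
          apply Finset.sum_congr rfl
          intro i _
          rw [map_smul, LinearMap.smul_apply]
          rfl
        rw [hexp]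
        have hvm : Matrix.vecMul g M j = 0 := by rw [hgM]; rfl
        rw [← hvm]
        simp [Matrix.vecMul, dotProduct]
      rw [hBl] at hsum
      exact hsum
    have hiw : ι ℂ w = ∑ j, b.repr w j • ι ℂ (b j) := by
      conv_lhs => rw [← Module.Basis.sum_repr b w]
      rw [map_sum]
      simp only [map_smul]
    rw [hiw, Finset.mul_sum, map_sum]
    apply Finset.sum_eq_zero
    intro j _
    rw [mul_smul_comm, map_smul, hbasis j]
    simp
lemma ιMulti_three (v : Fin 3 → V) :
    ιMulti ℂ 3 v = ι ℂ (v 0) * ι ℂ (v 1) * ι ℂ (v 2) := by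
  rw [ιMulti_apply]
  simp [List.ofFn_succ, mul_assoc]

/-- If two (independent, here: the first two vectors of a basis) vectors annihilate `ω`,
it is decomposable. -/
lemma decomposable_of_two (b : Module.Basis (Fin 5) ℂ V) (ω : ExteriorAlgebra ℂ V)
    (hω : ω ∈ ⋀[ℂ]^3 V) (h0 : ι ℂ (b 0) * ω = 0) (h1 : ι ℂ (b 1) * ω = 0) :
    ∃ u₁ u₂ u₃ : V, ω = ι ℂ u₁ * ι ℂ u₂ * ι ℂ u₃ := by
  classical
  obtain ⟨c, hc⟩ := exists_expansion b 3 ω hω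
  -- coefficients not containing k ∈ {0,1} vanish
  have hcs : ∀ (k : Fin 5), ι ℂ (b k) * ω = 0 →
      ∀ s : {s : Finset (Fin 5) // s.card = 3}, k ∉ s.1 → c s = 0 := by
    intro k hk s hks
    have h4 : (insert k s.1).card = 4 := by
      rw [Finset.card_insert_of_notMem hks, s.2]
    have key : phi b 4 (insert k s.1) h4 (ι ℂ (b k) * ω) = 0 := by rw [hk, map_zero]
    rw [hc, Finset.mul_sum] at key
    simp only [mul_smul_comm] at key
    rw [map_sum] at key
    rw [Fintype.sum_eq_single s (fun s' hs' => ?_)] at key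
    · obtain ⟨ε, hε1, hε2⟩ := ι_mul_wedge_not_mem b k s hks
      rw [map_smul, hε2, map_smul, phi_wedge_self b 4 (insert k s.1) h4] at key
      rcases hε1 with rfl | rfl <;> simpa using key
    · rw [map_smul]
      by_cases hks' : k ∈ s'.1
      · rw [ι_mul_wedge_mem b k s' hks']
        simp
      · obtain ⟨ε, hε1, hε2⟩ := ι_mul_wedge_not_mem b k s' hks'
        rw [hε2, map_smul, phi_wedge_ne b 4 (insert k s.1) h4 _ (fun hcontra => ?_)]
        · simp
        · apply hs'
          apply Subtype.ext
          have := congrArg (fun (u : Finset (Fin 5)) => u.erase k) hcontra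
          simpa [Finset.erase_insert hks', Finset.erase_insert hks] using this.symm
  -- the remaining index sets
  have hsets : ∀ s : Finset (Fin 5), s.card = 3 → 0 ∈ s → 1 ∈ s →
      s = {0, 1, 2} ∨ s = {0, 1, 3} ∨ s = {0, 1, 4} := by decide
  have p2 : ({0, 1, 2} : Finset (Fin 5)).card = 3 := by decide
  have p3 : ({0, 1, 3} : Finset (Fin 5)).card = 3 := by decide
  have p4 : ({0, 1, 4} : Finset (Fin 5)).card = 3 := by decide
  set s2 : {s : Finset (Fin 5) // s.card = 3} := ⟨{0, 1, 2}, p2⟩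
  set s3 : {s : Finset (Fin 5) // s.card = 3} := ⟨{0, 1, 3}, p3⟩
  set s4 : {s : Finset (Fin 5) // s.card = 3} := ⟨{0, 1, 4}, p4⟩
  have hω3 : ω = c s2 • ιMulti_family ℂ 3 b s2 + c s3 • ιMulti_family ℂ 3 b s3
      + c s4 • ιMulti_family ℂ 3 b s4 := by
    rw [hc]
    rw [← Finset.sum_subset (Finset.subset_univ ({s2, s3, s4} : Finset _)) ?van]
    · rw [Finset.sum_insert (by
          simp only [Finset.mem_insert, Finset.mem_singleton, not_or, Subtype.ext_iff]
          constructor <;> decide +revert),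
        Finset.sum_insert (by
          simp only [Finset.mem_singleton, Subtype.ext_iff]
          decide +revert),
        Finset.sum_singleton, add_assoc]
    case van =>
      intro s _ hs
      simp only [Finset.mem_insert, Finset.mem_singleton] at hs
      push_neg at hs
      obtain ⟨h2', h3', h4'⟩ := hs
      by_cases hz : 0 ∈ s.1
      · by_cases ho : 1 ∈ s.1
        · rcases hsets s.1 s.2 hz ho with h | h | h
          · exact absurd (Subtype.ext h) h2'
          · exact absurd (Subtype.ext h) h3'
          · exact absurd (Subtype.ext h) h4'
        · rw [hcs 1 h1 s ho, zero_smul]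
      · rw [hcs 0 h0 s hz, zero_smul]
  -- compute the three wedges
  have hget : ∀ (j : Fin 5) (hj : Function.Injective ![0, 1, j])
      (hima : Finset.image ![0, 1, j] Finset.univ = ({0, 1, j} : Finset (Fin 5)))
      (hcard : ({0, 1, j} : Finset (Fin 5)).card = 3),
      ∃ ε : ℂ, (ε = 1 ∨ ε = -1) ∧
        ιMulti_family ℂ 3 b ⟨{0, 1, j}, hcard⟩ = ε • (ι ℂ (b 0) * ι ℂ (b 1) * ι ℂ (b j)) := by
    intro j hj hima hcard
    obtain ⟨ε, hε1, hε2⟩ := ιMulti_inj_eq b ![0, 1, j] hj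
    refine ⟨ε, hε1, ?_⟩
    have h3 : ιMulti ℂ 3 (⇑b ∘ ![0, 1, j]) = ι ℂ (b 0) * ι ℂ (b 1) * ι ℂ (b j) := by
      rw [ιMulti_three]
      rfl
    have h6 : ιMulti ℂ 3 (⇑b ∘ ![0, 1, j]) = ε • ιMulti_family ℂ 3 b ⟨{0,1,j}, hcard⟩ := by
      rw [hε2]
      exact congrArg (ε • ·) (wedge_congr b
        ⟨Finset.image ![0, 1, j] Finset.univ,
          by rw [Finset.card_image_of_injective _ hj]; simp⟩ ⟨{0,1,j}, hcard⟩ hima)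
    rw [← h3, h6, smul_smul]
    rcases hε1 with rfl | rfl <;> simp
  obtain ⟨ε2, hε21, hε22⟩ := hget 2 (by decide) (by decide) p2
  obtain ⟨ε3, hε31, hε32⟩ := hget 3 (by decide) (by decide) p3
  obtain ⟨ε4, hε41, hε42⟩ := hget 4 (by decide) (by decide) p4
  refine ⟨b 0, b 1, (c s2 * ε2) • b 2 + (c s3 * ε3) • b 3 + (c s4 * ε4) • b 4, ?_⟩
  rw [hω3, hε22, hε32, hε42]
  simp only [map_add, map_smul, mul_add, mul_smul_comm, smul_smul]




end ULA

/-- if `ω ∈ ⋀³V₀` (`dim V₀ = 5`) is not decomposable, there is a unique line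
`[v]` with `v ∧ ω = 0`. -/
theorem unique_line_annihilating {V₀ : Type*} [AddCommGroup V₀] [Module ℂ V₀]
    [FiniteDimensional ℂ V₀] (h5 : Module.finrank ℂ V₀ = 5)
    (ω : ExteriorAlgebra ℂ V₀) (hω : ω ∈ ⋀[ℂ]^3 V₀)
    (hnd : ¬ ∃ u₁ u₂ u₃ : V₀, ω = ι ℂ u₁ * ι ℂ u₂ * ι ℂ u₃) :
    ∃ v : V₀, v ≠ 0 ∧ ι ℂ v * ω = 0 ∧
      ∀ v' : V₀, ι ℂ v' * ω = 0 → ∃ c : ℂ, v' = c • v := by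
  classical
  obtain ⟨v, hv0, hvω⟩ :=
    ULA.exists_annihilator (Module.finBasisOfFinrankEq ℂ V₀ h5) ω hω
  refine ⟨v, hv0, hvω, ?_⟩
  intro v' hv'
  by_contra hcon
  push_neg at hcon
  -- v, v' are linearly independent
  have hli : LinearIndependent ℂ ![v, v'] := by
    rw [LinearIndependent.pair_iff' hv0]
    intro a ha
    exact hcon a ha.symm
  have hr : Set.range ![v, v'] = ({v, v'} : Set V₀) := by
    ext x
    simp [Fin.exists_fin_two]
    tauto
  have hset := LinearIndependent.linearIndepOn_id hli
  rw [hr] at hset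
  -- extend to a basis
  set X := hset.extend (Set.subset_univ ({v, v'} : Set V₀)) with hX
  haveI : Fintype X := FiniteDimensional.fintypeBasisIndex (Module.Basis.extend hset)
  have hvX : v ∈ X := hset.subset_extend _ (by left; rfl)
  have hv'X : v' ∈ X := hset.subset_extend _ (by right; rfl)
  have hcard : Fintype.card X = 5 := by
    rw [← Module.finrank_eq_card_basis (Module.Basis.extend hset), h5]
  have hne : v ≠ v' := by
    intro h
    exact hcon 1 (by rw [one_smul, h])
  set xv : X := ⟨v, hvX⟩
  set xv' : X := ⟨v', hv'X⟩
  let g : Fin 5 ≃ X := (Fintype.equivFinOfCardEq hcard).symm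
  let e₁ : Fin 5 ≃ X := g.trans (Equiv.swap (g 0) xv)
  have he₁0 : e₁ 0 = xv := by simp [e₁, Equiv.swap_apply_left]
  set k : Fin 5 := e₁.symm xv' with hk
  have hk0 : k ≠ 0 := by
    intro h
    apply hne
    have : xv' = e₁ 0 := by rw [← h, hk]; simp
    rw [he₁0] at this
    exact congrArg Subtype.val this.symm
  let e₂ : Fin 5 ≃ X := (Equiv.swap (1 : Fin 5) k).trans e₁
  have he₂0 : e₂ 0 = xv := by
    have : Equiv.swap (1 : Fin 5) k 0 = 0 :=
      Equiv.swap_apply_of_ne_of_ne (by decide) (Ne.symm hk0)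
    show e₁ (Equiv.swap (1 : Fin 5) k 0) = xv
    rw [this, he₁0]
  have he₂1 : e₂ 1 = xv' := by
    show e₁ (Equiv.swap (1 : Fin 5) k 1) = xv'
    rw [Equiv.swap_apply_left, hk]
    simp
  let b : Module.Basis (Fin 5) ℂ V₀ := (Module.Basis.extend hset).reindex e₂.symm
  have hb0 : b 0 = v := by
    rw [Module.Basis.reindex_apply, Equiv.symm_symm, he₂0]
    exact Module.Basis.extend_apply_self hset xv
  have hb1 : b 1 = v' := by
    rw [Module.Basis.reindex_apply, Equiv.symm_symm, he₂1]
    exact Module.Basis.extend_apply_self hset xv'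
  exact hnd (ULA.decomposable_of_two b ω hω (by rw [hb0]; exact hvω) (by rw [hb1]; exact hv'))
end

section
/- Let $R$ be a commutative ring, $U$ a free $R$-module of finite rank $d$, and $\gamma: U^\vee \to U$ an $R$-linear map that is symmetric (i.e., equal to its own transpose under the canonical identification $U^{\vee\vee} \cong U$), with matrix $M$ (symmetric) in dual bases. Then for all indices $i,j,k$ the vector $M^c_{ij} a_k - M^c_{jk} a_i \in U$ lies in the image of $\gamma$, where $a_1,\dots,a_d$ is the chosen basis of $U$ and $M^c$ is the adjugate of $M$. -/
open Matrix

private lemma det_updateRow_sum'' {R : Type*} [CommRing R] {d : ℕ}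
    (A : Matrix (Fin d) (Fin d) R) (k : Fin d) (c : Fin d → R) (v : Fin d → Fin d → R)
    (s : Finset (Fin d)) :
    ((A.updateRow k (∑ h ∈ s, c h • v h)).det) = ∑ h ∈ s, c h * (A.updateRow k (v h)).det := by
  classical
  induction s using Finset.induction_on with
  | empty =>
      rw [Finset.sum_empty, Finset.sum_empty]
      exact Matrix.det_eq_zero_of_row_eq_zero k (fun t => by simp)
  | insert _ _ hnot ih =>
      rw [Finset.sum_insert hnot, Finset.sum_insert hnot, Matrix.det_updateRow_add,
        Matrix.det_updateRow_smul, ih]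

/-- for a symmetric matrix `M` (viewed as a symmetric map `γ : U^∨ → U` in the
standard basis `a_i = Pi.single i 1`), the vector `Mᶜ_{ij} a_k - Mᶜ_{jk} a_i` lies in the image
of `γ`, i.e. it is `M.mulVec x` for some `x`. -/
theorem adjugate_relation {R : Type*} [CommRing R] {d : ℕ}
    (M : Matrix (Fin d) (Fin d) R) (hM : Mᵀ = M) (i j k : Fin d) :
    ∃ x : Fin d → R,
      M.mulVec x =
        M.adjugate i j • (Pi.single k 1 : Fin d → R) - M.adjugate j k • (Pi.single i 1 : Fin d → R) := by
  classical
  have hadjsymm : ∀ a b : Fin d, M.adjugate a b = M.adjugate b a := by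
    intro a b
    have : (M.adjugate)ᵀ = M.adjugate := by rw [Matrix.adjugate_transpose, hM]
    calc M.adjugate a b = (M.adjugate)ᵀ b a := rfl
      _ = M.adjugate b a := by rw [this]
  rcases eq_or_ne i k with rfl | hik
  · refine ⟨0, ?_⟩
    rw [Matrix.mulVec_zero, hadjsymm i j, sub_self]
  · set A := M.updateRow i (Pi.single j 1) with hA
    refine ⟨fun h => (A.updateRow k (Pi.single h 1)).det, ?_⟩
    funext m
    have hMm : (M m : Fin d → R) = ∑ h, M m h • (Pi.single h 1 : Fin d → R) := by
      ext t
      simp [Pi.single_apply, eq_comm]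
    have key : (M.mulVec fun h => (A.updateRow k (Pi.single h 1)).det) m
        = (A.updateRow k (M m)).det := by
      rw [Matrix.mulVec, dotProduct]
      rw [show A.updateRow k (M m)
            = A.updateRow k (∑ h, M m h • (Pi.single h 1 : Fin d → R)) by rw [← hMm]]
      rw [det_updateRow_sum'' A k (fun h => M m h) (fun h => Pi.single h 1)]
    rw [key]
    rcases eq_or_ne m k with rfl | hmk
    · -- row m = k : value is adjugate M i j
      have hAk : A m = M m := Matrix.updateRow_ne (Ne.symm hik)
      rw [← hAk, Matrix.updateRow_eq_self]
      have : A.det = M.adjugate j i := (Matrix.adjugate_apply M j i).symm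
      rw [this, hadjsymm j i]
      simp [Pi.single_apply, hik.symm]
    · rcases eq_or_ne m i with rfl | hmi
      · -- row m = i : value is -adjugate M j k
        have hswap : A.updateRow k (M m)
            = (M.updateRow k (Pi.single j 1)).submatrix (Equiv.swap m k) id := by
          ext a b
          rcases eq_or_ne a m with rfl | ham
          · simp [Matrix.submatrix_apply, Equiv.swap_apply_left,
              Matrix.updateRow_ne hmk, Matrix.updateRow_self, hA]
          · rcases eq_or_ne a k with rfl | hak
            · simp [Matrix.submatrix_apply, Equiv.swap_apply_right,
                Matrix.updateRow_self, hA, Matrix.updateRow_ne hmk]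
            · simp [Matrix.submatrix_apply, Equiv.swap_apply_of_ne_of_ne ham hak,
                Matrix.updateRow_ne hak, hA, Matrix.updateRow_ne ham]
        rw [hswap, Matrix.det_permute, Equiv.Perm.sign_swap hmk]
        have : (M.updateRow k (Pi.single j 1)).det = M.adjugate j k :=
          (Matrix.adjugate_apply M j k).symm
        rw [this]
        simp [Pi.single_apply, hmk]
      · -- generic row: two equal rows, determinant zero
        have h1 : (A.updateRow k (M m)) m = M m := by
          rw [Matrix.updateRow_ne hmk, hA, Matrix.updateRow_ne hmi]
        have h2 : (A.updateRow k (M m)) k = M m := Matrix.updateRow_self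
        rw [Matrix.det_zero_of_row_eq hmk (h1.trans h2.symm)]
        simp [Pi.single_apply, hmk, hmi]
end
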